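/- arXiv:1004.2265 — 2 statements merged into one kernel-verified Lean document; each statement's English description precedes it below -/
import Mathlib

section
/- The octagon additive continued fraction expansion determines a unique point: if u, u' ∈ ℝ and s : ℕ → {1,…,7} are such that for every k ≥ 0 both Fᵏ(u) and Fᵏ(u') lie in the interior int(Σ_{s(k)}) of the sector Σ_{s(k)}, then u = u'. -/
open MeasureTheory Set

noncomputable section

/-- The linear fractional transformation of `ℝ` induced by a 2×2 real matrix,
with the convention that the value is `0` when the denominator vanishes. -/
def mob (M : Matrix (Fin 2) (Fin 2) ℝ) (u : ℝ) : ℝ :=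
  (M 0 0 * u + M 0 1) / (M 1 0 * u + M 1 1)

/-- The matrix `γ = [[-1, 2+2√2],[0,1]]`. -/
def gam : Matrix (Fin 2) (Fin 2) ℝ := !![-1, 2 + 2 * Real.sqrt 2; 0, 1]

/-- The isometries `ν₁, …, ν₇` of the octagon. -/
def nu : ℕ → Matrix (Fin 2) (Fin 2) ℝ
  | 1 => (Real.sqrt 2)⁻¹ • !![1, 1; 1, -1]
  | 2 => (Real.sqrt 2)⁻¹ • !![1, 1; -1, 1]
  | 3 => !![0, 1; 1, 0]
  | 4 => !![0, 1; -1, 0]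
  | 5 => (Real.sqrt 2)⁻¹ • !![-1, 1; 1, 1]
  | 6 => (Real.sqrt 2)⁻¹ • !![-1, 1; -1, -1]
  | 7 => !![-1, 0; 0, 1]
  | _ => 1

/-- The index `i` of the sector `Σᵢ` (in inverse-slope coordinates) containing `u`:
`Σ₀ = (1+√2, ∞)`, `Σ₁ = (1, 1+√2]`, `Σ₂ = (√2-1, 1]`, `Σ₃ = (0, √2-1]`, `Σ₄ = (1-√2, 0]`,
`Σ₅ = (-1, 1-√2]`, `Σ₆ = (-1-√2, -1]`, `Σ₇ = (-∞, -1-√2]`. -/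
def sectorIndex (u : ℝ) : ℕ :=
  if 1 + Real.sqrt 2 < u then 0
  else if 1 < u then 1
  else if Real.sqrt 2 - 1 < u then 2
  else if 0 < u then 3
  else if 1 - Real.sqrt 2 < u then 4
  else if -1 < u then 5
  else if -(1 + Real.sqrt 2) < u then 6
  else 7

/-- The octagon Farey map in inverse-slope coordinates: `F(u) = (γ·νᵢ)[u]` for `u ∈ Σᵢ`
(`i = 1,…,7`), and `F(u) = u` for `u ∈ Σ₀`. -/
def F (u : ℝ) : ℝ :=
  if sectorIndex u = 0 then u else mob (gam * nu (sectorIndex u)) u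

/-- The interiors of the sectors `Σ₁, …, Σ₇`. -/
def sInt : ℕ → Set ℝ
  | 1 => Set.Ioo 1 (1 + Real.sqrt 2)
  | 2 => Set.Ioo (Real.sqrt 2 - 1) 1
  | 3 => Set.Ioo 0 (Real.sqrt 2 - 1)
  | 4 => Set.Ioo (1 - Real.sqrt 2) 0
  | 5 => Set.Ioo (-1) (1 - Real.sqrt 2)
  | 6 => Set.Ioo (-(1 + Real.sqrt 2)) (-1)
  | 7 => Set.Iio (-(1 + Real.sqrt 2))
  | _ => ∅

-- basic sqrt facts
lemma rsq : Real.sqrt 2 ^ 2 = 2 := Real.sq_sqrt (by norm_num)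
lemma r_gt : (1.4 : ℝ) < Real.sqrt 2 := by
  nlinarith [rsq, Real.sqrt_nonneg 2]
lemma r_lt : Real.sqrt 2 < 1.5 := by
  nlinarith [rsq, Real.sqrt_nonneg 2]

lemma mob_smul (c : ℝ) (hc : c ≠ 0) (M : Matrix (Fin 2) (Fin 2) ℝ) (v : ℝ) :
    mob (c • M) v = mob M v := by
  simp only [mob, Matrix.smul_apply, smul_eq_mul]
  rw [show c * M 0 0 * v + c * M 0 1 = c * (M 0 0 * v + M 0 1) by ring,
      show c * M 1 0 * v + c * M 1 1 = c * (M 1 0 * v + M 1 1) by ring,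
      mul_div_mul_left _ _ hc]

lemma mob_fin (a b c d v : ℝ) : mob !![a,b;c,d] v = (a*v+b)/(c*v+d) := by
  simp [mob]

lemma sqrt2_inv_ne : (Real.sqrt 2)⁻¹ ≠ 0 := by positivity

-- F on each sector
lemma F_eq1 {v : ℝ} (h : v ∈ sInt 1) :
    F v = ((1 + 2*Real.sqrt 2)*v + (-(3 + 2*Real.sqrt 2)))/(1*v + (-1)) := by
  obtain ⟨h1, h2⟩ := h
  have hsi : sectorIndex v = 1 := by
    unfold sectorIndex; rw [if_neg (by linarith), if_pos h1]
  unfold F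
  rw [hsi, show gam * nu 1 =
      (Real.sqrt 2)⁻¹ • !![1 + 2*Real.sqrt 2, -(3 + 2*Real.sqrt 2); 1, -1] by
    show gam * ((Real.sqrt 2)⁻¹ • _) = _
    rw [Matrix.mul_smul, gam, Matrix.mul_fin_two]; congr 1; norm_num; ring_nf; try simp,
    mob_smul _ sqrt2_inv_ne, mob_fin]
  norm_num

lemma F_eq2 {v : ℝ} (h : v ∈ sInt 2) :
    F v = ((-(3 + 2*Real.sqrt 2))*v + (1 + 2*Real.sqrt 2))/((-1)*v + 1) := by
  obtain ⟨h1, h2⟩ := h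
  have hr := r_gt
  have hsi : sectorIndex v = 2 := by
    unfold sectorIndex
    rw [if_neg (by linarith), if_neg (by linarith), if_pos h1]
  unfold F
  rw [hsi, show gam * nu 2 =
      (Real.sqrt 2)⁻¹ • !![-(3 + 2*Real.sqrt 2), 1 + 2*Real.sqrt 2; -1, 1] by
    show gam * ((Real.sqrt 2)⁻¹ • _) = _
    rw [Matrix.mul_smul, gam, Matrix.mul_fin_two]; congr 1; norm_num; ring_nf; try simp,
    mob_smul _ sqrt2_inv_ne, mob_fin]
  norm_num

lemma F_eq3 {v : ℝ} (h : v ∈ sInt 3) :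
    F v = ((2 + 2*Real.sqrt 2)*v + (-1))/(1*v + 0) := by
  obtain ⟨h1, h2⟩ := h
  have hr := r_gt; have hr2 := r_lt
  have hsi : sectorIndex v = 3 := by
    unfold sectorIndex
    rw [if_neg (by linarith), if_neg (by linarith), if_neg (by linarith), if_pos h1]
  unfold F
  rw [hsi, if_neg (by norm_num), show gam * nu 3 = !![2 + 2*Real.sqrt 2, -1; 1, 0] by
    show gam * !![0, 1; 1, 0] = _
    rw [gam, Matrix.mul_fin_two]; congr 1 <;> norm_num,
    mob_fin]

lemma F_eq4 {v : ℝ} (h : v ∈ sInt 4) :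
    F v = ((-(2 + 2*Real.sqrt 2))*v + (-1))/((-1)*v + 0) := by
  obtain ⟨h1, h2⟩ := h
  have hr := r_gt; have hr2 := r_lt
  have hsi : sectorIndex v = 4 := by
    unfold sectorIndex
    rw [if_neg (by linarith), if_neg (by linarith), if_neg (by linarith),
        if_neg (by linarith), if_pos h1]
  unfold F
  rw [hsi, if_neg (by norm_num), show gam * nu 4 = !![-(2 + 2*Real.sqrt 2), -1; -1, 0] by
    show gam * !![0, 1; -1, 0] = _
    rw [gam, Matrix.mul_fin_two]; congr 1 <;> norm_num,
    mob_fin]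

lemma F_eq5 {v : ℝ} (h : v ∈ sInt 5) :
    F v = ((3 + 2*Real.sqrt 2)*v + (1 + 2*Real.sqrt 2))/(1*v + 1) := by
  obtain ⟨h1, h2⟩ := h
  have hr := r_gt; have hr2 := r_lt
  have hsi : sectorIndex v = 5 := by
    unfold sectorIndex
    rw [if_neg (by linarith), if_neg (by linarith), if_neg (by linarith),
        if_neg (by linarith), if_neg (by linarith), if_pos h1]
  unfold F
  rw [hsi, show gam * nu 5 =
      (Real.sqrt 2)⁻¹ • !![3 + 2*Real.sqrt 2, 1 + 2*Real.sqrt 2; 1, 1] by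
    show gam * ((Real.sqrt 2)⁻¹ • _) = _
    rw [Matrix.mul_smul, gam, Matrix.mul_fin_two]; congr 1; norm_num; ring_nf; try simp,
    mob_smul _ sqrt2_inv_ne, mob_fin]
  norm_num

lemma F_eq6 {v : ℝ} (h : v ∈ sInt 6) :
    F v = ((-(1 + 2*Real.sqrt 2))*v + (-(3 + 2*Real.sqrt 2)))/((-1)*v + (-1)) := by
  obtain ⟨h1, h2⟩ := h
  have hr := r_gt; have hr2 := r_lt
  have hsi : sectorIndex v = 6 := by
    unfold sectorIndex
    rw [if_neg (by linarith), if_neg (by linarith), if_neg (by linarith),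
        if_neg (by linarith), if_neg (by linarith), if_neg (by linarith), if_pos h1]
  unfold F
  rw [hsi, show gam * nu 6 =
      (Real.sqrt 2)⁻¹ • !![-(1 + 2*Real.sqrt 2), -(3 + 2*Real.sqrt 2); -1, -1] by
    show gam * ((Real.sqrt 2)⁻¹ • _) = _
    rw [Matrix.mul_smul, gam, Matrix.mul_fin_two]; congr 1; norm_num; ring_nf; try simp,
    mob_smul _ sqrt2_inv_ne, mob_fin]
  norm_num

lemma F_eq7 {v : ℝ} (h : v ∈ sInt 7) :
    F v = v + (2 + 2*Real.sqrt 2) := by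
  have h1 : v < -(1 + Real.sqrt 2) := h
  have hr := r_gt; have hr2 := r_lt
  have hsi : sectorIndex v = 7 := by
    unfold sectorIndex
    rw [if_neg (by linarith), if_neg (by linarith), if_neg (by linarith),
        if_neg (by linarith), if_neg (by linarith), if_neg (by linarith),
        if_neg (by linarith)]
  unfold F
  rw [hsi, if_neg (by norm_num), show gam * nu 7 = !![1, 2 + 2*Real.sqrt 2; 0, 1] by
    show gam * !![-1, 0; 0, 1] = _
    rw [gam, Matrix.mul_fin_two]; congr 1 <;> norm_num,
    mob_fin]
  rw [show (0:ℝ)*v + 1 = 1 by ring, div_one]; ring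

-- difference formulas
lemma diff1 {v w : ℝ} (hv : v ∈ sInt 1) (hw : w ∈ sInt 1) :
    F v - F w = 2*(v-w)/((v-1)*(w-1)) := by
  obtain ⟨hv1, hv2⟩ := hv; obtain ⟨hw1, hw2⟩ := hw
  rw [F_eq1 ⟨hv1, hv2⟩, F_eq1 ⟨hw1, hw2⟩]
  have h1 : (1:ℝ)*v + (-1) ≠ 0 := by norm_num; linarith
  have h2 : (1:ℝ)*w + (-1) ≠ 0 := by norm_num; linarith
  have h3 : (v-1)*(w-1) ≠ 0 := by
    apply ne_of_gt; apply mul_pos <;> linarith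
  rw [div_sub_div _ _ h1 h2, div_eq_div_iff (mul_ne_zero h1 h2) h3]; ring

lemma diff2 {v w : ℝ} (hv : v ∈ sInt 2) (hw : w ∈ sInt 2) :
    F v - F w = -2*(v-w)/((1-v)*(1-w)) := by
  obtain ⟨hv1, hv2⟩ := hv; obtain ⟨hw1, hw2⟩ := hw
  rw [F_eq2 ⟨hv1, hv2⟩, F_eq2 ⟨hw1, hw2⟩]
  have h1 : (-1:ℝ)*v + 1 ≠ 0 := by norm_num; intro h; linarith
  have h2 : (-1:ℝ)*w + 1 ≠ 0 := by norm_num; intro h; linarith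
  have h3 : (1-v)*(1-w) ≠ 0 := by
    apply ne_of_gt; apply mul_pos <;> linarith
  rw [div_sub_div _ _ h1 h2, div_eq_div_iff (mul_ne_zero h1 h2) h3]; ring

lemma diff3 {v w : ℝ} (hv : v ∈ sInt 3) (hw : w ∈ sInt 3) :
    F v - F w = (v-w)/(v*w) := by
  obtain ⟨hv1, hv2⟩ := hv; obtain ⟨hw1, hw2⟩ := hw
  rw [F_eq3 ⟨hv1, hv2⟩, F_eq3 ⟨hw1, hw2⟩]
  have h1 : (1:ℝ)*v + 0 ≠ 0 := by norm_num; linarith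
  have h2 : (1:ℝ)*w + 0 ≠ 0 := by norm_num; linarith
  have h3 : v*w ≠ 0 := by apply ne_of_gt; apply mul_pos <;> linarith
  rw [div_sub_div _ _ h1 h2, div_eq_div_iff (mul_ne_zero h1 h2) h3]; ring

lemma diff4 {v w : ℝ} (hv : v ∈ sInt 4) (hw : w ∈ sInt 4) :
    F v - F w = -(v-w)/(v*w) := by
  obtain ⟨hv1, hv2⟩ := hv; obtain ⟨hw1, hw2⟩ := hw
  rw [F_eq4 ⟨hv1, hv2⟩, F_eq4 ⟨hw1, hw2⟩]
  have h1 : (-1:ℝ)*v + 0 ≠ 0 := by norm_num; linarith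
  have h2 : (-1:ℝ)*w + 0 ≠ 0 := by norm_num; linarith
  have h3 : v*w ≠ 0 := by apply ne_of_gt; nlinarith
  rw [div_sub_div _ _ h1 h2, div_eq_div_iff (mul_ne_zero h1 h2) h3]; ring

lemma diff5 {v w : ℝ} (hv : v ∈ sInt 5) (hw : w ∈ sInt 5) :
    F v - F w = 2*(v-w)/((v+1)*(w+1)) := by
  obtain ⟨hv1, hv2⟩ := hv; obtain ⟨hw1, hw2⟩ := hw
  rw [F_eq5 ⟨hv1, hv2⟩, F_eq5 ⟨hw1, hw2⟩]
  have h1 : (1:ℝ)*v + 1 ≠ 0 := by norm_num; linarith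
  have h2 : (1:ℝ)*w + 1 ≠ 0 := by norm_num; linarith
  have h3 : (v+1)*(w+1) ≠ 0 := by apply ne_of_gt; apply mul_pos <;> linarith
  rw [div_sub_div _ _ h1 h2, div_eq_div_iff (mul_ne_zero h1 h2) h3]; ring

lemma diff6 {v w : ℝ} (hv : v ∈ sInt 6) (hw : w ∈ sInt 6) :
    F v - F w = -2*(v-w)/((v+1)*(w+1)) := by
  obtain ⟨hv1, hv2⟩ := hv; obtain ⟨hw1, hw2⟩ := hw
  rw [F_eq6 ⟨hv1, hv2⟩, F_eq6 ⟨hw1, hw2⟩]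
  have h1 : (-1:ℝ)*v + (-1) ≠ 0 := by norm_num; intro h; linarith
  have h2 : (-1:ℝ)*w + (-1) ≠ 0 := by norm_num; intro h; linarith
  have h3 : (v+1)*(w+1) ≠ 0 := by apply ne_of_gt; nlinarith
  rw [div_sub_div _ _ h1 h2, div_eq_div_iff (mul_ne_zero h1 h2) h3]; ring

-- growth lemmas
lemma grow1 {v w : ℝ} (hv : v ∈ sInt 1) (hw : w ∈ sInt 1) :
    |v - w| ≤ |F v - F w| := by
  obtain ⟨hv1, hv2⟩ := hv; obtain ⟨hw1, hw2⟩ := hw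
  have hP : 0 < (v-1)*(w-1) := mul_pos (by linarith) (by linarith)
  have hPle : (v-1)*(w-1) ≤ 2 := by nlinarith [rsq]
  rw [diff1 ⟨hv1,hv2⟩ ⟨hw1,hw2⟩, abs_div, abs_of_pos hP, abs_mul, abs_two,
      le_div_iff₀ hP]
  calc |v-w| * ((v-1)*(w-1)) ≤ |v-w| * 2 :=
        mul_le_mul_of_nonneg_left hPle (abs_nonneg _)
    _ = 2 * |v-w| := by ring

lemma grow1' {v w : ℝ} (hv : v ∈ sInt 1) (hw : w ∈ sInt 1)
    (h1 : F v ≤ 1) (h2 : F w ≤ 1) : 2*|v - w| ≤ |F v - F w| := by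
  obtain ⟨hv1, hv2⟩ := hv; obtain ⟨hw1, hw2⟩ := hw
  have key : ∀ z : ℝ, z ∈ sInt 1 → F z ≤ 1 → z - 1 ≤ Real.sqrt 2 / 2 := by
    rintro z ⟨hz1, hz2⟩ hFz
    rw [F_eq1 ⟨hz1, hz2⟩] at hFz
    have hden : (0:ℝ) < 1*z + (-1) := by norm_num; linarith
    rw [div_le_one hden] at hFz
    nlinarith [rsq, r_gt]
  have kv := key v ⟨hv1,hv2⟩ h1
  have kw := key w ⟨hw1,hw2⟩ h2
  have hP : 0 < (v-1)*(w-1) := mul_pos (by linarith) (by linarith)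
  have hPle : (v-1)*(w-1) ≤ 1/2 := by nlinarith [rsq, r_gt]
  rw [diff1 ⟨hv1,hv2⟩ ⟨hw1,hw2⟩, abs_div, abs_of_pos hP, abs_mul, abs_two,
      le_div_iff₀ hP]
  calc 2*|v-w| * ((v-1)*(w-1)) ≤ 2*|v-w| * (1/2) := by
        apply mul_le_mul_of_nonneg_left hPle; positivity
    _ = |v-w| := by ring
    _ ≤ 2 * |v-w| := by nlinarith [abs_nonneg (v-w)]

lemma grow2 {v w : ℝ} (hv : v ∈ sInt 2) (hw : w ∈ sInt 2) :
    2*|v - w| ≤ |F v - F w| := by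
  obtain ⟨hv1, hv2⟩ := hv; obtain ⟨hw1, hw2⟩ := hw
  have hr := r_gt
  have hP : 0 < (1-v)*(1-w) := mul_pos (by linarith) (by linarith)
  have hPle : (1-v)*(1-w) ≤ 1/2 := by nlinarith [rsq]
  rw [diff2 ⟨hv1,hv2⟩ ⟨hw1,hw2⟩, abs_div, abs_of_pos hP,
      show (-2:ℝ)*(v-w) = -(2*(v-w)) by ring, abs_neg, abs_mul, abs_two,
      le_div_iff₀ hP]
  calc 2*|v-w| * ((1-v)*(1-w)) ≤ 2*|v-w| * (1/2) := by
        apply mul_le_mul_of_nonneg_left hPle; positivity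
    _ = |v-w| := by ring
    _ ≤ 2 * |v-w| := by nlinarith [abs_nonneg (v-w)]

lemma grow3 {v w : ℝ} (hv : v ∈ sInt 3) (hw : w ∈ sInt 3) :
    2*|v - w| ≤ |F v - F w| := by
  obtain ⟨hv1, hv2⟩ := hv; obtain ⟨hw1, hw2⟩ := hw
  have hr := r_lt
  have hP : 0 < v*w := mul_pos (by linarith) (by linarith)
  have hPle : v*w ≤ 1/2 := by nlinarith [rsq]
  rw [diff3 ⟨hv1,hv2⟩ ⟨hw1,hw2⟩, abs_div, abs_of_pos hP, le_div_iff₀ hP]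
  calc 2*|v-w| * (v*w) ≤ 2*|v-w| * (1/2) := by
        apply mul_le_mul_of_nonneg_left hPle; positivity
    _ = |v-w| := by ring

lemma grow4 {v w : ℝ} (hv : v ∈ sInt 4) (hw : w ∈ sInt 4) :
    2*|v - w| ≤ |F v - F w| := by
  obtain ⟨hv1, hv2⟩ := hv; obtain ⟨hw1, hw2⟩ := hw
  have hr := r_lt
  have hP : 0 < v*w := by nlinarith
  have hPle : v*w ≤ 1/2 := by nlinarith [rsq]
  rw [diff4 ⟨hv1,hv2⟩ ⟨hw1,hw2⟩, abs_div, abs_of_pos hP, abs_neg, le_div_iff₀ hP]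
  calc 2*|v-w| * (v*w) ≤ 2*|v-w| * (1/2) := by
        apply mul_le_mul_of_nonneg_left hPle; positivity
    _ = |v-w| := by ring

lemma grow5 {v w : ℝ} (hv : v ∈ sInt 5) (hw : w ∈ sInt 5) :
    2*|v - w| ≤ |F v - F w| := by
  obtain ⟨hv1, hv2⟩ := hv; obtain ⟨hw1, hw2⟩ := hw
  have hr := r_gt
  have hP : 0 < (v+1)*(w+1) := mul_pos (by linarith) (by linarith)
  have hPle : (v+1)*(w+1) ≤ 1/2 := by nlinarith [rsq]
  rw [diff5 ⟨hv1,hv2⟩ ⟨hw1,hw2⟩, abs_div, abs_of_pos hP, abs_mul, abs_two,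
      le_div_iff₀ hP]
  calc 2*|v-w| * ((v+1)*(w+1)) ≤ 2*|v-w| * (1/2) := by
        apply mul_le_mul_of_nonneg_left hPle; positivity
    _ = |v-w| := by ring
    _ ≤ 2 * |v-w| := by nlinarith [abs_nonneg (v-w)]

lemma grow6 {v w : ℝ} (hv : v ∈ sInt 6) (hw : w ∈ sInt 6) :
    |v - w| ≤ |F v - F w| := by
  obtain ⟨hv1, hv2⟩ := hv; obtain ⟨hw1, hw2⟩ := hw
  have hP : 0 < (v+1)*(w+1) := mul_pos_of_neg_of_neg (by linarith) (by linarith)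
  have hPle : (v+1)*(w+1) ≤ 2 := by nlinarith [rsq]
  rw [diff6 ⟨hv1,hv2⟩ ⟨hw1,hw2⟩, abs_div, abs_of_pos hP,
      show (-2:ℝ)*(v-w) = -(2*(v-w)) by ring, abs_neg, abs_mul, abs_two,
      le_div_iff₀ hP]
  calc |v-w| * ((v+1)*(w+1)) ≤ |v-w| * 2 :=
        mul_le_mul_of_nonneg_left hPle (abs_nonneg _)
    _ = 2 * |v-w| := by ring

lemma grow6' {v w : ℝ} (hv : v ∈ sInt 6) (hw : w ∈ sInt 6)
    (h1 : F v ≤ 1) (h2 : F w ≤ 1) : 2*|v - w| ≤ |F v - F w| := by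
  obtain ⟨hv1, hv2⟩ := hv; obtain ⟨hw1, hw2⟩ := hw
  have key : ∀ z : ℝ, z ∈ sInt 6 → F z ≤ 1 → -(z + 1) ≤ Real.sqrt 2 / 2 := by
    rintro z ⟨hz1, hz2⟩ hFz
    rw [F_eq6 ⟨hz1, hz2⟩] at hFz
    have hden : (0:ℝ) < (-1)*z + (-1) := by norm_num; linarith
    rw [div_le_one hden] at hFz
    nlinarith [rsq, r_gt]
  have kv := key v ⟨hv1,hv2⟩ h1
  have kw := key w ⟨hw1,hw2⟩ h2
  have hP : 0 < (v+1)*(w+1) := mul_pos_of_neg_of_neg (by linarith) (by linarith)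
  have hPle : (v+1)*(w+1) ≤ 1/2 := by nlinarith [rsq, r_gt]
  rw [diff6 ⟨hv1,hv2⟩ ⟨hw1,hw2⟩, abs_div, abs_of_pos hP,
      show (-2:ℝ)*(v-w) = -(2*(v-w)) by ring, abs_neg, abs_mul, abs_two,
      le_div_iff₀ hP]
  calc 2*|v-w| * ((v+1)*(w+1)) ≤ 2*|v-w| * (1/2) := by
        apply mul_le_mul_of_nonneg_left hPle; positivity
    _ = |v-w| := by ring
    _ ≤ 2 * |v-w| := by nlinarith [abs_nonneg (v-w)]

lemma grow7 {v w : ℝ} (hv : v ∈ sInt 7) (hw : w ∈ sInt 7) :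
    |F v - F w| = |v - w| := by
  rw [F_eq7 hv, F_eq7 hw]; ring_nf

-- membership consequences
lemma sInt_lt_one {j : ℕ} (h2 : 2 ≤ j) (h7 : j ≤ 7) {v : ℝ} (hv : v ∈ sInt j) :
    v < 1 := by
  have hr := r_gt; have hr' := r_lt
  interval_cases j
  · exact hv.2
  · linarith [hv.2]
  · linarith [hv.2]
  · linarith [hv.2]
  · linarith [hv.2]
  · simp only [sInt, Set.mem_Iio] at hv; linarith

lemma sInt_abs_lt {j : ℕ} (h1 : 1 ≤ j) (h6 : j ≤ 6) {v : ℝ} (hv : v ∈ sInt j) :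
    |v| < 1 + Real.sqrt 2 := by
  have hr := r_gt; have hr' := r_lt
  rw [abs_lt]
  interval_cases j <;> obtain ⟨ha, hb⟩ := hv <;> constructor <;> linarith

lemma grow_any {i : ℕ} (h1 : 1 ≤ i) (h7 : i ≤ 7) {v w : ℝ}
    (hv : v ∈ sInt i) (hw : w ∈ sInt i) : |v - w| ≤ |F v - F w| := by
  have h0 : (0:ℝ) ≤ |v - w| := abs_nonneg _
  interval_cases i
  · exact grow1 hv hw
  · linarith [grow2 hv hw]
  · linarith [grow3 hv hw]
  · linarith [grow4 hv hw]
  · linarith [grow5 hv hw]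
  · exact grow6 hv hw
  · exact (grow7 hv hw).ge

-- escape from sector 1
lemma escape1 {m : ℕ} (x : ℕ → ℝ) (hx : ∀ k, x (k+1) = F (x k))
    (hmem : ∀ k, m ≤ k → x k ∈ sInt 1) : False := by
  have hr := r_gt; have hr' := r_lt
  set r := Real.sqrt 2
  set c := x m with hc
  have hcmem : c ∈ sInt 1 := hmem m le_rfl
  obtain ⟨hc1, hc2⟩ := hcmem
  set δ := (1 + r - c)^2 / r with hδ
  have hδpos : 0 < δ := by
    apply div_pos (pow_pos (by linarith : (0:ℝ) < 1 + r - c) 2) (by linarith)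
  have key : ∀ j : ℕ, x (m + j) ≤ c - j * δ := by
    intro j
    induction j with
    | zero => simp [hc]
    | succ j ih =>
      have hz : x (m + j) ∈ sInt 1 := hmem _ (Nat.le_add_right m j)
      obtain ⟨hz1, hz2⟩ := hz
      set z := x (m + j)
      have hzc : z ≤ c := by
        have : (0:ℝ) ≤ j * δ := by positivity
        linarith [ih]
      have hden : (0:ℝ) < 1 * z + (-1) := by norm_num; linarith
      have hstep : x (m + (j+1)) ≤ z - δ := by
        rw [show m + (j+1) = (m+j) + 1 by ring, hx, F_eq1 ⟨hz1, hz2⟩,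
            div_le_iff₀ hden]
        have hsq : (1 + r - c)^2 ≤ (1 + r - z)^2 := by nlinarith
        have hδr : δ * r = (1 + r - c)^2 := by
          rw [hδ]; field_simp
        nlinarith [rsq, mul_le_mul_of_nonneg_left (show z - 1 ≤ r by linarith) hδpos.le, hsq, hδr]
      have : x (m + (j+1)) ≤ c - j * δ - δ := by linarith
      push_cast
      linarith
  obtain ⟨j, hj⟩ := exists_nat_gt ((c - 1) / δ)
  have hj' : c - 1 < j * δ := by
    rw [div_lt_iff₀ hδpos] at hj; linarith
  have := (hmem (m + j) (Nat.le_add_right m j)).1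
  have := key j
  linarith

/-- The octagon additive continued fraction expansion determines a unique point: if the
orbits of `u` and `u'` under the octagon Farey map visit the interiors of the same
sectors `Σ_{s(k)}` at every step, then `u = u'`. -/
theorem octagonCF_unique_point (u u' : ℝ) (s : ℕ → ℕ)
    (hs : ∀ k, 1 ≤ s k ∧ s k ≤ 7)
    (hu : ∀ k, F^[k] u ∈ sInt (s k))
    (hu' : ∀ k, F^[k] u' ∈ sInt (s k)) :
    u = u' := by
  by_contra hne
  have hr := r_gt; have hr' := r_lt
  have hx : ∀ k, F^[k+1] u = F (F^[k] u) := fun k => Function.iterate_succ_apply' F k u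
  have hy : ∀ k, F^[k+1] u' = F (F^[k] u') := fun k => Function.iterate_succ_apply' F k u'
  set d : ℕ → ℝ := fun k => |F^[k] u - F^[k] u'| with hddef
  have hd0 : 0 < d 0 := by
    simp only [hddef, Function.iterate_zero, id]
    exact abs_pos.2 (sub_ne_zero.2 hne)
  have mono : ∀ k, d k ≤ d (k+1) := by
    intro k
    simp only [hddef, hx k, hy k]
    exact grow_any (hs k).1 (hs k).2 (hu k) (hu' k)
  have mono2 : Monotone d := monotone_nat_of_le_succ mono
  have escape7 : ∀ m, ∃ k, m ≤ k ∧ s k ≠ 7 := by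
    intro m; by_contra h; push_neg at h
    have step : ∀ j : ℕ, F^[m+j] u = F^[m] u + j*(2+2*Real.sqrt 2) := by
      intro j; induction j with
      | zero => simp
      | succ j ih =>
        have h7 : F^[m+j] u ∈ sInt 7 := by
          rw [← h (m+j) (Nat.le_add_right m j)]; exact hu (m+j)
        rw [show m+(j+1) = (m+j)+1 by ring, hx, F_eq7 h7, ih]; push_cast; ring
    obtain ⟨j, hj⟩ := exists_nat_gt (-(1+Real.sqrt 2) - F^[m] u)
    have h7 : F^[m+j] u ∈ sInt 7 := by
      rw [← h _ (Nat.le_add_right m j)]; exact hu _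
    simp only [sInt, Set.mem_Iio] at h7
    have hge : (j:ℝ) ≤ j*(2+2*Real.sqrt 2) := by
      nlinarith [Nat.cast_nonneg (α := ℝ) j]
    rw [step j] at h7; linarith
  have bound : ∀ k, d k ≤ 5 := by
    intro k
    obtain ⟨k', hk', h7⟩ := escape7 k
    refine le_trans (mono2 hk') ?_
    have h16 : 1 ≤ s k' ∧ s k' ≤ 6 := by have := hs k'; omega
    have ax := sInt_abs_lt h16.1 h16.2 (hu k')
    have ay := sInt_abs_lt h16.1 h16.2 (hu' k')
    have htri : |F^[k'] u - F^[k'] u'| ≤ |F^[k'] u| + |F^[k'] u'| := abs_sub _ _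
    simp only [hddef]
    linarith
  -- the doubling condition
  have dbl : ∀ k, ((s k = 2 ∨ s k = 3 ∨ s k = 4 ∨ s k = 5) ∨
      ((s k = 1 ∨ s k = 6) ∧ s (k+1) ≠ 1)) → 2 * d k ≤ d (k+1) := by
    intro k hP
    have hxk := hu k; have hyk := hu' k
    simp only [hddef, hx k, hy k]
    rcases hP with (h|h|h|h) | ⟨h16, hn1⟩
    · rw [h] at hxk hyk; exact grow2 hxk hyk
    · rw [h] at hxk hyk; exact grow3 hxk hyk
    · rw [h] at hxk hyk; exact grow4 hxk hyk
    · rw [h] at hxk hyk; exact grow5 hxk hyk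
    · have hn2 : 2 ≤ s (k+1) := by have := hs (k+1); omega
      have hFx : F (F^[k] u) < 1 := by
        rw [← hx]; exact sInt_lt_one hn2 (hs (k+1)).2 (hu (k+1))
      have hFy : F (F^[k] u') < 1 := by
        rw [← hy]; exact sInt_lt_one hn2 (hs (k+1)).2 (hu' (k+1))
      rcases h16 with h|h
      · rw [h] at hxk hyk; exact grow1' hxk hyk hFx.le hFy.le
      · rw [h] at hxk hyk; exact grow6' hxk hyk hFx.le hFy.le
  have hfin : ∃ K, ∀ k, K ≤ k → ¬ ((s k = 2 ∨ s k = 3 ∨ s k = 4 ∨ s k = 5) ∨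
      ((s k = 1 ∨ s k = 6) ∧ s (k+1) ≠ 1)) := by
    by_contra hcon; push_neg at hcon
    have grown : ∀ n : ℕ, ∃ k, 2^n * d 0 ≤ d k := by
      intro n; induction n with
      | zero => exact ⟨0, by norm_num⟩
      | succ n ih =>
        obtain ⟨k, hk⟩ := ih
        obtain ⟨k', hk', hP⟩ := hcon k
        refine ⟨k'+1, ?_⟩
        calc 2^(n+1) * d 0 = 2*(2^n * d 0) := by ring
          _ ≤ 2 * d k := by linarith
          _ ≤ 2 * d k' := by linarith [mono2 hk']
          _ ≤ d (k'+1) := dbl k' hP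
    obtain ⟨n, hn⟩ := pow_unbounded_of_one_lt (5 / d 0) (one_lt_two (α := ℝ))
    obtain ⟨k, hk⟩ := grown n
    have h5 : (5:ℝ) < 2^n * d 0 := by rw [div_lt_iff₀ hd0] at hn; nlinarith
    linarith [bound k]
  obtain ⟨K, hK⟩ := hfin
  obtain ⟨k0, hk0K, hk07⟩ := escape7 K
  have h1 : s (k0+1) = 1 := by
    have hnP := hK k0 hk0K
    have hb := hs k0
    by_contra hne1
    apply hnP
    rcases (show s k0 = 1 ∨ s k0 = 6 ∨ (s k0 = 2 ∨ s k0 = 3 ∨ s k0 = 4 ∨ s k0 = 5)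
      by omega) with h|h|h
    · exact Or.inr ⟨Or.inl h, hne1⟩
    · exact Or.inr ⟨Or.inr h, hne1⟩
    · exact Or.inl h
  have hall : ∀ k, k0+1 ≤ k → s k = 1 := by
    intro k hk
    refine Nat.le_induction h1 ?_ k hk
    intro n hn ih
    by_contra hne1
    exact hK n (by omega) (Or.inr ⟨Or.inl ih, hne1⟩)
  refine escape1 (m := k0+1) (fun k => F^[k] u) hx ?_
  intro k hk
  have hm := hu k
  rw [hall k hk] at hm
  exact hm
end
end

section
/- The backward octagon additive continued fraction expansion determines a unique point: if v, v' ∈ (1+√2, ∞) and s : ℕ → {1,…,7} are such that for every k ≥ 0 both (F⁻)ᵏ(v) and (F⁻)ᵏ(v') lie in the interior of γ[Σ_{s(k)}], then v = v'. -/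
open MeasureTheory Set

noncomputable section

/-- The sectors `Σ₀, Σ₁, …, Σ₇` in inverse-slope coordinates. -/
def Sec : ℕ → Set ℝ
  | 0 => Set.Ioi (1 + Real.sqrt 2)
  | 1 => Set.Ioc 1 (1 + Real.sqrt 2)
  | 2 => Set.Ioc (Real.sqrt 2 - 1) 1
  | 3 => Set.Ioc 0 (Real.sqrt 2 - 1)
  | 4 => Set.Ioc (1 - Real.sqrt 2) 0
  | 5 => Set.Ioc (-1) (1 - Real.sqrt 2)
  | 6 => Set.Ioc (-(1 + Real.sqrt 2)) (-1)
  | 7 => Set.Iic (-(1 + Real.sqrt 2))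
  | _ => ∅

/-- The backward map `F⁻`: since `γ` is an involution, `v ∈ γ[Σⱼ]` iff `γ[v] ∈ Σⱼ`, and
then `F⁻(v) = (νⱼ·γ)[v]`; for `v ∉ Σ₀` we set `F⁻(v) = v`. -/
def Fm (v : ℝ) : ℝ :=
  if v ≤ 1 + Real.sqrt 2 then v
  else mob (nu (sectorIndex (mob gam v)) * gam) v

local notation "R2" => Real.sqrt 2

lemma rsq_s10 : R2 * R2 = 2 := Real.mul_self_sqrt (by norm_num)
lemma rlb : 1.41 < R2 := by nlinarith [rsq_s10, Real.sqrt_nonneg 2]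
lemma rub : R2 < 1.42 := by nlinarith [rsq_s10, Real.sqrt_nonneg 2]
lemma rne : R2 ≠ 0 := by nlinarith [rlb]

lemma mob_gam (x : ℝ) : mob gam x = 2 + 2*R2 - x := by
  simp [mob, gam]; ring

lemma mob_smul_s10 (s : ℝ) (hs : s ≠ 0) (M : Matrix (Fin 2) (Fin 2) ℝ) (x : ℝ) :
    mob (s • M) x = mob M x := by
  simp only [mob, Matrix.smul_apply, smul_eq_mul]
  rw [show s*(M 0 0)*x + s*(M 0 1) = s*((M 0 0)*x + M 0 1) by ring,
    show s*(M 1 0)*x + s*(M 1 1) = s*((M 1 0)*x + M 1 1) by ring,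
    mul_div_mul_left _ _ hs]

def JJ : ℕ → Set ℝ
  | 1 => Set.Ioo (1+R2) (1+2*R2)
  | 2 => Set.Ioo (1+2*R2) (3+R2)
  | 3 => Set.Ioo (3+R2) (2+2*R2)
  | 4 => Set.Ioo (2+2*R2) (1+3*R2)
  | 5 => Set.Ioo (1+3*R2) (3+2*R2)
  | 6 => Set.Ioo (3+2*R2) (3+3*R2)
  | 7 => Set.Ioi (3+3*R2)
  | _ => ∅

set_option linter.unnecessarySeqFocus false

lemma nu1gam : nu 1 * gam = (R2)⁻¹ • !![-1, 3+2*R2; -1, 1+2*R2] := by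
  rw [show nu 1 = (R2)⁻¹ • !![1, 1; 1, -1] from rfl, gam, smul_mul_assoc]
  congr 1; rw [Matrix.mul_fin_two]; congr 1 <;> ring

lemma nu2gam : nu 2 * gam = (R2)⁻¹ • !![-1, 3+2*R2; 1, -(1+2*R2)] := by
  rw [show nu 2 = (R2)⁻¹ • !![1, 1; -1, 1] from rfl, gam, smul_mul_assoc]
  congr 1; rw [Matrix.mul_fin_two]; congr 1 <;> ring

lemma nu3gam : nu 3 * gam = !![0, 1; -1, 2+2*R2] := by
  rw [show nu 3 = !![(0:ℝ), 1; 1, 0] from rfl, gam]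
  rw [Matrix.mul_fin_two]; congr 1 <;> ring

lemma nu4gam : nu 4 * gam = !![0, 1; 1, -(2+2*R2)] := by
  rw [show nu 4 = !![(0:ℝ), 1; -1, 0] from rfl, gam]
  rw [Matrix.mul_fin_two]; congr 1 <;> ring

lemma nu5gam : nu 5 * gam = (R2)⁻¹ • !![1, -(1+2*R2); -1, 3+2*R2] := by
  rw [show nu 5 = (R2)⁻¹ • !![-1, 1; 1, 1] from rfl, gam, smul_mul_assoc]
  congr 1; rw [Matrix.mul_fin_two]; congr 1 <;> ring

lemma nu6gam : nu 6 * gam = (R2)⁻¹ • !![1, -(1+2*R2); 1, -(3+2*R2)] := by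
  rw [show nu 6 = (R2)⁻¹ • !![-1, 1; -1, -1] from rfl, gam, smul_mul_assoc]
  congr 1; rw [Matrix.mul_fin_two]; congr 1 <;> ring

lemma nu7gam : nu 7 * gam = !![1, -(2+2*R2); 0, 1] := by
  rw [show nu 7 = !![(-1:ℝ), 0; 0, 1] from rfl, gam]
  rw [Matrix.mul_fin_two]; congr 1 <;> ring

lemma Fm1 {x : ℝ} (hx : x ∈ JJ 1) : Fm x = (3+2*R2 - x)/(1+2*R2 - x) := by
  obtain ⟨h1, h2⟩ := hx
  rw [Fm, if_neg (not_le.mpr h1), mob_gam]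
  rw [show sectorIndex (2+2*R2 - x) = 1 by
    unfold sectorIndex; rw [if_neg (by push_neg; linarith), if_pos (by linarith)]]
  rw [nu1gam, mob_smul_s10 _ (inv_ne_zero rne)]
  simp [mob]; ring_nf

lemma Fm2 {x : ℝ} (hx : x ∈ JJ 2) : Fm x = (3+2*R2 - x)/(x - (1+2*R2)) := by
  obtain ⟨h1, h2⟩ := hx
  have hr := rlb; have hu := rub
  rw [Fm, if_neg (not_le.mpr (by linarith)), mob_gam]
  rw [show sectorIndex (2+2*R2 - x) = 2 by
    unfold sectorIndex
    rw [if_neg (by push_neg; linarith), if_neg (by push_neg; linarith), if_pos (by linarith)]]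
  rw [nu2gam, mob_smul_s10 _ (inv_ne_zero rne)]
  simp [mob]; ring_nf

lemma Fm3 {x : ℝ} (hx : x ∈ JJ 3) : Fm x = 1/(2+2*R2 - x) := by
  obtain ⟨h1, h2⟩ := hx
  have hr := rlb; have hu := rub
  rw [Fm, if_neg (not_le.mpr (by linarith)), mob_gam]
  rw [show sectorIndex (2+2*R2 - x) = 3 by
    unfold sectorIndex
    rw [if_neg (by push_neg; linarith), if_neg (by push_neg; linarith),
      if_neg (by push_neg; linarith), if_pos (by linarith)]]
  rw [nu3gam]
  simp [mob]; ring_nf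

lemma Fm4 {x : ℝ} (hx : x ∈ JJ 4) : Fm x = 1/(x - (2+2*R2)) := by
  obtain ⟨h1, h2⟩ := hx
  have hr := rlb; have hu := rub
  rw [Fm, if_neg (not_le.mpr (by linarith)), mob_gam]
  rw [show sectorIndex (2+2*R2 - x) = 4 by
    unfold sectorIndex
    rw [if_neg (by push_neg; linarith), if_neg (by push_neg; linarith),
      if_neg (by push_neg; linarith), if_neg (by push_neg; linarith), if_pos (by linarith)]]
  rw [nu4gam]
  simp [mob]; ring_nf

lemma Fm5 {x : ℝ} (hx : x ∈ JJ 5) : Fm x = (x - (1+2*R2))/(3+2*R2 - x) := by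
  obtain ⟨h1, h2⟩ := hx
  have hr := rlb; have hu := rub
  rw [Fm, if_neg (not_le.mpr (by linarith)), mob_gam]
  rw [show sectorIndex (2+2*R2 - x) = 5 by
    unfold sectorIndex
    rw [if_neg (by push_neg; linarith), if_neg (by push_neg; linarith),
      if_neg (by push_neg; linarith), if_neg (by push_neg; linarith),
      if_neg (by push_neg; linarith), if_pos (by linarith)]]
  rw [nu5gam, mob_smul_s10 _ (inv_ne_zero rne)]
  simp [mob]; ring_nf

lemma Fm6 {x : ℝ} (hx : x ∈ JJ 6) : Fm x = (x - (1+2*R2))/(x - (3+2*R2)) := by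
  obtain ⟨h1, h2⟩ := hx
  have hr := rlb; have hu := rub
  rw [Fm, if_neg (not_le.mpr (by linarith)), mob_gam]
  rw [show sectorIndex (2+2*R2 - x) = 6 by
    unfold sectorIndex
    rw [if_neg (by push_neg; linarith), if_neg (by push_neg; linarith),
      if_neg (by push_neg; linarith), if_neg (by push_neg; linarith),
      if_neg (by push_neg; linarith), if_neg (by push_neg; linarith), if_pos (by linarith)]]
  rw [nu6gam, mob_smul_s10 _ (inv_ne_zero rne)]
  simp [mob]; ring_nf

lemma Fm7 {x : ℝ} (hx : x ∈ JJ 7) : Fm x = x - (2+2*R2) := by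
  have h1 : 3+3*R2 < x := hx
  have hr := rlb; have hu := rub
  rw [Fm, if_neg (not_le.mpr (by linarith)), mob_gam]
  rw [show sectorIndex (2+2*R2 - x) = 7 by
    unfold sectorIndex
    rw [if_neg (by push_neg; linarith), if_neg (by push_neg; linarith),
      if_neg (by push_neg; linarith), if_neg (by push_neg; linarith),
      if_neg (by push_neg; linarith), if_neg (by push_neg; linarith),
      if_neg (by push_neg; linarith)]]
  rw [nu7gam]
  simp [mob]; ring_nf
local notation "R2'" => Real.sqrt 2

lemma gap1 {x y : ℝ} (hx : x ∈ JJ 1) (hy : y ∈ JJ 1) :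
    Fm x - Fm y = 2*(x-y)/((1+2*R2'-x)*(1+2*R2'-y)) := by
  have d1 : 1+2*R2' - x ≠ 0 := ne_of_gt (by linarith [hx.2])
  have d2 : 1+2*R2' - y ≠ 0 := ne_of_gt (by linarith [hy.2])
  rw [Fm1 hx, Fm1 hy]; field_simp; ring

lemma gap2 {x y : ℝ} (hx : x ∈ JJ 2) (hy : y ∈ JJ 2) :
    Fm x - Fm y = 2*(y-x)/((x-(1+2*R2'))*(y-(1+2*R2'))) := by
  have d1 : x - (1+2*R2') ≠ 0 := ne_of_gt (by linarith [hx.1])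
  have d2 : y - (1+2*R2') ≠ 0 := ne_of_gt (by linarith [hy.1])
  rw [Fm2 hx, Fm2 hy]; field_simp; ring

lemma gap3 {x y : ℝ} (hx : x ∈ JJ 3) (hy : y ∈ JJ 3) :
    Fm x - Fm y = (x-y)/((2+2*R2'-x)*(2+2*R2'-y)) := by
  have d1 : 2+2*R2' - x ≠ 0 := ne_of_gt (by linarith [hx.2])
  have d2 : 2+2*R2' - y ≠ 0 := ne_of_gt (by linarith [hy.2])
  rw [Fm3 hx, Fm3 hy]; rw [div_sub_div _ _ d1 d2]; ring

lemma gap4 {x y : ℝ} (hx : x ∈ JJ 4) (hy : y ∈ JJ 4) :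
    Fm x - Fm y = (y-x)/((x-(2+2*R2'))*(y-(2+2*R2'))) := by
  have d1 : x - (2+2*R2') ≠ 0 := ne_of_gt (by linarith [hx.1])
  have d2 : y - (2+2*R2') ≠ 0 := ne_of_gt (by linarith [hy.1])
  rw [Fm4 hx, Fm4 hy]; rw [div_sub_div _ _ d1 d2]; ring

lemma gap5 {x y : ℝ} (hx : x ∈ JJ 5) (hy : y ∈ JJ 5) :
    Fm x - Fm y = 2*(x-y)/((3+2*R2'-x)*(3+2*R2'-y)) := by
  have d1 : 3+2*R2' - x ≠ 0 := ne_of_gt (by linarith [hx.2])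
  have d2 : 3+2*R2' - y ≠ 0 := ne_of_gt (by linarith [hy.2])
  rw [Fm5 hx, Fm5 hy]; field_simp; ring

lemma gap6 {x y : ℝ} (hx : x ∈ JJ 6) (hy : y ∈ JJ 6) :
    Fm x - Fm y = 2*(y-x)/((x-(3+2*R2'))*(y-(3+2*R2'))) := by
  have d1 : x - (3+2*R2') ≠ 0 := ne_of_gt (by linarith [hx.1])
  have d2 : y - (3+2*R2') ≠ 0 := ne_of_gt (by linarith [hy.1])
  rw [Fm6 hx, Fm6 hy]; field_simp; ring

lemma keyA {a D : ℝ} (hD : 0 < D) (hD2 : D ≤ 2) : |a| ≤ |2*a/D| := by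
  rw [abs_div, abs_of_pos hD, le_div_iff₀ hD, abs_mul, abs_two]; nlinarith [abs_nonneg a]

lemma keyB {a D : ℝ} (hD : 0 < D) (hD1 : D ≤ 1) : |a| ≤ |a/D| := by
  rw [abs_div, abs_of_pos hD, le_div_iff₀ hD]; nlinarith [abs_nonneg a]

lemma keyA2 {a D : ℝ} (hD : 0 < D) (hD2 : D ≤ 1) : 2*|a| ≤ |2*a/D| := by
  rw [abs_div, abs_of_pos hD, le_div_iff₀ hD, abs_mul, abs_two]; nlinarith [abs_nonneg a]

lemma keyB2 {a D : ℝ} (hD : 0 < D) (hD1 : D ≤ 1/2) : 2*|a| ≤ |a/D| := by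
  rw [abs_div, abs_of_pos hD, le_div_iff₀ hD]; nlinarith [abs_nonneg a]

/-- expanding step: each branch does not decrease distances -/
lemma step_mono {j : ℕ} (hj1 : 1 ≤ j) (hj7 : j ≤ 7) {x y : ℝ}
    (hx : x ∈ JJ j) (hy : y ∈ JJ j) : |x - y| ≤ |Fm x - Fm y| := by
  have hr := rlb; have hu := rub; have h2 := rsq_s10
  interval_cases j
  · obtain ⟨hx1, hx2⟩ := hx; obtain ⟨hy1, hy2⟩ := hy
    rw [gap1 ⟨hx1, hx2⟩ ⟨hy1, hy2⟩]
    exact keyA (by nlinarith) (by nlinarith)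
  · obtain ⟨hx1, hx2⟩ := hx; obtain ⟨hy1, hy2⟩ := hy
    rw [show x - y = -(y-x) by ring, abs_neg, gap2 ⟨hx1, hx2⟩ ⟨hy1, hy2⟩]
    exact keyA (by nlinarith) (by nlinarith)
  · obtain ⟨hx1, hx2⟩ := hx; obtain ⟨hy1, hy2⟩ := hy
    rw [gap3 ⟨hx1, hx2⟩ ⟨hy1, hy2⟩]
    exact keyB (by nlinarith) (by nlinarith)
  · obtain ⟨hx1, hx2⟩ := hx; obtain ⟨hy1, hy2⟩ := hy
    rw [show x - y = -(y-x) by ring, abs_neg, gap4 ⟨hx1, hx2⟩ ⟨hy1, hy2⟩]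
    exact keyB (by nlinarith) (by nlinarith)
  · obtain ⟨hx1, hx2⟩ := hx; obtain ⟨hy1, hy2⟩ := hy
    rw [gap5 ⟨hx1, hx2⟩ ⟨hy1, hy2⟩]
    exact keyA (by nlinarith) (by nlinarith)
  · obtain ⟨hx1, hx2⟩ := hx; obtain ⟨hy1, hy2⟩ := hy
    rw [show x - y = -(y-x) by ring, abs_neg, gap6 ⟨hx1, hx2⟩ ⟨hy1, hy2⟩]
    exact keyA (by nlinarith) (by nlinarith)
  · rw [Fm7 hx, Fm7 hy, show x - (2+2*R2') - (y - (2+2*R2')) = x - y by ring]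

/-- uniformly expanding branches 2,3,4,5 -/
lemma step_double {j : ℕ} (hj2 : 2 ≤ j) (hj5 : j ≤ 5) {x y : ℝ}
    (hx : x ∈ JJ j) (hy : y ∈ JJ j) : 2*|x - y| ≤ |Fm x - Fm y| := by
  have hr := rlb; have hu := rub; have h2 := rsq_s10
  interval_cases j
  · obtain ⟨hx1, hx2⟩ := hx; obtain ⟨hy1, hy2⟩ := hy
    rw [show x - y = -(y-x) by ring, abs_neg, gap2 ⟨hx1, hx2⟩ ⟨hy1, hy2⟩]
    exact keyA2 (by nlinarith) (by nlinarith)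
  · obtain ⟨hx1, hx2⟩ := hx; obtain ⟨hy1, hy2⟩ := hy
    rw [gap3 ⟨hx1, hx2⟩ ⟨hy1, hy2⟩]
    exact keyB2 (by nlinarith) (by nlinarith)
  · obtain ⟨hx1, hx2⟩ := hx; obtain ⟨hy1, hy2⟩ := hy
    rw [show x - y = -(y-x) by ring, abs_neg, gap4 ⟨hx1, hx2⟩ ⟨hy1, hy2⟩]
    exact keyB2 (by nlinarith) (by nlinarith)
  · obtain ⟨hx1, hx2⟩ := hx; obtain ⟨hy1, hy2⟩ := hy
    rw [gap5 ⟨hx1, hx2⟩ ⟨hy1, hy2⟩]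
    exact keyA2 (by nlinarith) (by nlinarith)

/-- branch 6, when both images land right of 3+2√2, doubles distances -/
lemma step_double6 {x y : ℝ} (hx : x ∈ JJ 6) (hy : y ∈ JJ 6)
    (hfx : 3+2*R2' < Fm x) (hfy : 3+2*R2' < Fm y) : 2*|x - y| ≤ |Fm x - Fm y| := by
  have hr := rlb; have hu := rub; have h2 := rsq_s10
  obtain ⟨hx1, hx2⟩ := hx; obtain ⟨hy1, hy2⟩ := hy
  have hxA : 0 < x - (3+2*R2') := by linarith
  have hyA : 0 < y - (3+2*R2') := by linarith
  have hfx' : (3+2*R2') * (x - (3+2*R2')) < x - (1+2*R2') := by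
    rw [Fm6 ⟨hx1, hx2⟩] at hfx
    calc (3+2*R2') * (x - (3+2*R2'))
        < (x - (1+2*R2'))/(x - (3+2*R2')) * (x - (3+2*R2')) :=
          mul_lt_mul_of_pos_right hfx hxA
      _ = x - (1+2*R2') := by field_simp
  have hfy' : (3+2*R2') * (y - (3+2*R2')) < y - (1+2*R2') := by
    rw [Fm6 ⟨hy1, hy2⟩] at hfy
    calc (3+2*R2') * (y - (3+2*R2'))
        < (y - (1+2*R2'))/(y - (3+2*R2')) * (y - (3+2*R2')) :=
          mul_lt_mul_of_pos_right hfy hyA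
      _ = y - (1+2*R2') := by field_simp
  have hxb : x - (3+2*R2') ≤ R2' - 1 := by nlinarith
  have hyb : y - (3+2*R2') ≤ R2' - 1 := by nlinarith
  rw [show x - y = -(y-x) by ring, abs_neg, gap6 ⟨hx1, hx2⟩ ⟨hy1, hy2⟩]
  exact keyA2 (by nlinarith) (by nlinarith)

/-- the bounded branches have diameter < √2 -/
lemma diam_lt {j : ℕ} (hj1 : 1 ≤ j) (hj6 : j ≤ 6) {x y : ℝ}
    (hx : x ∈ JJ j) (hy : y ∈ JJ j) : |x - y| < R2' := by
  have hr := rlb; have hu := rub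
  rw [abs_sub_lt_iff]
  interval_cases j <;>
    exact ⟨by linarith [hx.1, hx.2, hy.1, hy.2], by linarith [hx.1, hx.2, hy.1, hy.2]⟩

/-- every branch interval lies right of 1+√2 -/
lemma JJ_gt {j : ℕ} (hj1 : 1 ≤ j) (hj7 : j ≤ 7) {x : ℝ} (hx : x ∈ JJ j) : 1+R2' < x := by
  have hr := rlb
  interval_cases j
  · exact hx.1
  · linarith [hx.1]
  · linarith [hx.1]
  · linarith [hx.1]
  · linarith [hx.1]
  · linarith [hx.1]
  · have : (3:ℝ)+3*R2' < x := hx; linarith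

/-- branch-1 offset formula -/
lemma Fm1c {x : ℝ} (hx : x ∈ JJ 1) : Fm x - (1+R2') = R2'*(x-(1+R2'))/(1+2*R2'-x) := by
  have h2 := rsq_s10
  have d1 : 1+2*R2' - x ≠ 0 := ne_of_gt (by linarith [hx.2])
  rw [Fm1 hx]; field_simp; ring_nf; linear_combination -h2

/-- branch-1 in inverse coordinates is a translation -/
lemma Fm1w {x : ℝ} (hx : x ∈ JJ 1) :
    (Fm x - (1+R2'))⁻¹ = (x - (1+R2'))⁻¹ - (R2')⁻¹ := by
  have h2 := rsq_s10
  have d1 : 1+2*R2' - x ≠ 0 := ne_of_gt (by linarith [hx.2])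
  have d0 : x - (1+R2') ≠ 0 := ne_of_gt (by linarith [hx.1])
  rw [Fm1c hx]
  rw [div_eq_mul_inv, mul_inv, mul_inv]
  field_simp
  ring
local notation "R2c" => Real.sqrt 2

/-- step identity for a branch-1 run: the quantity `|x-y|/((x-c)(y-c))` is invariant -/
lemma run_step {x y : ℝ} (hx : x ∈ JJ 1) (hy : y ∈ JJ 1) :
    |Fm x - Fm y| * ((x - (1+R2c))*(y - (1+R2c)))
      = |x - y| * ((Fm x - (1+R2c))*(Fm y - (1+R2c))) := by
  have h2 := rsq_s10
  have hD : 0 < (1+2*R2c-x)*(1+2*R2c-y) :=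
    mul_pos (by linarith [hx.2]) (by linarith [hy.2])
  have e : (Fm x - (1+R2c))*(Fm y - (1+R2c))
      = 2*((x - (1+R2c))*(y - (1+R2c)))/((1+2*R2c-x)*(1+2*R2c-y)) := by
    rw [Fm1c hx, Fm1c hy, div_mul_div_comm]
    rw [show R2c*(x-(1+R2c))*(R2c*(y-(1+R2c))) = (R2c*R2c)*((x-(1+R2c))*(y-(1+R2c))) by ring, h2]
  rw [gap1 hx hy, e, abs_div, abs_of_pos hD, abs_mul, abs_two]
  have hxc : 0 < x - (1+R2c) := by linarith [hx.1]
  have hyc : 0 < y - (1+R2c) := by linarith [hy.1]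
  field_simp

/-- an orbit cannot decrease by `2+2√2` forever while staying above `3+3√2` -/
lemma escape (X : ℕ → ℝ) (K : ℕ)
    (h : ∀ k, K ≤ k → 3+3*R2c < X k ∧ X (k+1) = X k - (2+2*R2c)) : False := by
  have hr := rlb
  have key : ∀ n : ℕ, X (K+n) = X K - n*(2+2*R2c) := by
    intro n
    induction n with
    | zero => simp
    | succ n ih =>
      have h' := (h (K+n) (Nat.le_add_right _ _)).2
      rw [show K+(n+1) = (K+n)+1 from rfl, h', ih]
      push_cast; ring
  obtain ⟨n, hn⟩ := exists_nat_gt (X K)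
  have h1 := (h (K+n) (Nat.le_add_right _ _)).1
  rw [key n] at h1
  have hn0 : (0:ℝ) ≤ (n:ℝ) := Nat.cast_nonneg n
  have hX0 : 0 < X K := by have := (h K le_rfl).1; linarith
  nlinarith

/-- if events each (eventually) double a bounded monotone positive quantity,
they stop happening -/
lemma gains_stop {d : ℕ → ℝ} (hmono : Monotone d) (hpos : 0 < d 0)
    (hbdd : ∀ k, d k < R2c) (P : ℕ → Prop)
    (hgain : ∀ k, P k → ∃ m, k < m ∧ 2 * d k ≤ d m) :
    ∃ K, ∀ k, K ≤ k → ¬ P k := by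
  by_contra h
  push_neg at h
  have step : ∀ K : ℕ, ∃ m, 2 * d K ≤ d m := by
    intro K
    obtain ⟨k, hk, hPk⟩ := h K
    obtain ⟨m, _, hd⟩ := hgain k hPk
    exact ⟨m, le_trans (by linarith [hmono hk]) hd⟩
  choose g hg using step
  have key : ∀ n : ℕ, 2^n * d 0 ≤ d (g^[n] 0) := by
    intro n
    induction n with
    | zero => simp
    | succ n ih =>
      rw [Function.iterate_succ_apply']
      calc 2^(n+1) * d 0 = 2 * (2^n * d 0) := by ring
        _ ≤ 2 * d (g^[n] 0) := by linarith
        _ ≤ d (g (g^[n] 0)) := hg _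
  obtain ⟨n, hn⟩ := pow_unbounded_of_one_lt (R2c / d 0) (one_lt_two (α := ℝ))
  have h1 := key n
  have h2 := hbdd (g^[n] 0)
  rw [div_lt_iff₀ hpos] at hn
  linarith
local notation "Rq" => Real.sqrt 2

lemma interior_eq {j : ℕ} (hj1 : 1 ≤ j) (hj7 : j ≤ 7) :
    interior (mob gam '' Sec j) = JJ j := by
  have him : ∀ S : Set ℝ, mob gam '' S = (fun x => 2+2*Rq - x) '' S :=
    fun S => Set.image_congr fun x _ => mob_gam x
  interval_cases j
  · rw [show Sec 1 = Set.Ioc 1 (1+Rq) from rfl, him, Set.image_const_sub_Ioc, interior_Ico]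
    rw [show JJ 1 = Set.Ioo (1+Rq) (1+2*Rq) from rfl]
    congr 1 <;> ring
  · rw [show Sec 2 = Set.Ioc (Rq-1) 1 from rfl, him, Set.image_const_sub_Ioc, interior_Ico]
    rw [show JJ 2 = Set.Ioo (1+2*Rq) (3+Rq) from rfl]
    congr 1 <;> ring
  · rw [show Sec 3 = Set.Ioc 0 (Rq-1) from rfl, him, Set.image_const_sub_Ioc, interior_Ico]
    rw [show JJ 3 = Set.Ioo (3+Rq) (2+2*Rq) from rfl]
    congr 1 <;> ring
  · rw [show Sec 4 = Set.Ioc (1-Rq) 0 from rfl, him, Set.image_const_sub_Ioc, interior_Ico]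
    rw [show JJ 4 = Set.Ioo (2+2*Rq) (1+3*Rq) from rfl]
    congr 1 <;> ring
  · rw [show Sec 5 = Set.Ioc (-1) (1-Rq) from rfl, him, Set.image_const_sub_Ioc, interior_Ico]
    rw [show JJ 5 = Set.Ioo (1+3*Rq) (3+2*Rq) from rfl]
    congr 1 <;> ring
  · rw [show Sec 6 = Set.Ioc (-(1+Rq)) (-1) from rfl, him, Set.image_const_sub_Ioc, interior_Ico]
    rw [show JJ 6 = Set.Ioo (3+2*Rq) (3+3*Rq) from rfl]
    congr 1 <;> ring
  · rw [show Sec 7 = Set.Iic (-(1+Rq)) from rfl, him, Set.image_const_sub_Iic, interior_Ici]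
    rw [show JJ 7 = Set.Ioi (3+3*Rq) from rfl]
    congr 1; ring

/-- The backward octagon additive continued fraction expansion determines a unique point:
if the orbits of `v, v' ∈ Σ₀` under `F⁻` visit the interiors of the same intervals
`γ[Σ_{s(k)}]` at every step, then `v = v'`. -/
theorem backwardCF_unique_point (v v' : ℝ)
    (hv : v ∈ Set.Ioi (1 + Real.sqrt 2)) (hv' : v' ∈ Set.Ioi (1 + Real.sqrt 2))
    (s : ℕ → ℕ) (hs : ∀ k, 1 ≤ s k ∧ s k ≤ 7)
    (h1 : ∀ k, Fm^[k] v ∈ interior (mob gam '' Sec (s k)))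
    (h2 : ∀ k, Fm^[k] v' ∈ interior (mob gam '' Sec (s k))) :
    v = v' := by
  have hrl := rlb; have hru := rub; have hsq := rsq_s10
  by_contra hne
  set X : ℕ → ℝ := fun k => Fm^[k] v with hXdef
  set Y : ℕ → ℝ := fun k => Fm^[k] v' with hYdef
  have hXs : ∀ k, X (k+1) = Fm (X k) := fun k => Function.iterate_succ_apply' Fm k v
  have hYs : ∀ k, Y (k+1) = Fm (Y k) := fun k => Function.iterate_succ_apply' Fm k v'
  have hXm : ∀ k, X k ∈ JJ (s k) := fun k => by
    rw [← interior_eq (hs k).1 (hs k).2]; exact h1 k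
  have hYm : ∀ k, Y k ∈ JJ (s k) := fun k => by
    rw [← interior_eq (hs k).1 (hs k).2]; exact h2 k
  set d : ℕ → ℝ := fun k => |X k - Y k| with hddef
  have hd0 : 0 < d 0 := by
    show (0:ℝ) < |Fm^[0] v - Fm^[0] v'|
    simp only [Function.iterate_zero_apply]
    exact abs_pos.mpr (sub_ne_zero.mpr hne)
  have hmono : Monotone d := monotone_nat_of_le_succ (fun k => by
    show |X k - Y k| ≤ |X (k+1) - Y (k+1)|
    rw [hXs, hYs]
    exact step_mono (hs k).1 (hs k).2 (hXm k) (hYm k))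
  have hdpos : ∀ k, 0 < d k := fun k => lt_of_lt_of_le hd0 (hmono (Nat.zero_le k))
  have hJJ7mem : ∀ k, s k = 7 → 3+3*Rq < X k := fun k hk => by
    have h := hXm k; rw [hk] at h; exact h
  have hmem67X : ∀ k, s k = 6 ∨ s k = 7 → 3+2*Rq < X k := by
    rintro k (h | h)
    · have h' := hXm k; rw [h] at h'; exact h'.1
    · have := hJJ7mem k h; linarith
  have hmem67Y : ∀ k, s k = 6 ∨ s k = 7 → 3+2*Rq < Y k := by
    rintro k (h | h)
    · have h' := hYm k; rw [h] at h'; exact h'.1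
    · have h' := hYm k; rw [h] at h'
      have : 3+3*Rq < Y k := h'; linarith
  have hbdd : ∀ k, d k < Rq := by
    intro k
    by_contra hge
    push_neg at hge
    refine escape X k ?_
    intro m hm
    have hdm : Rq ≤ d m := le_trans hge (hmono hm)
    have h7 : s m = 7 := by
      rcases Nat.lt_or_ge (s m) 7 with h | h
      · exfalso
        have hlt := diam_lt (hs m).1 (by omega) (hXm m) (hYm m)
        have : d m = |X m - Y m| := rfl
        linarith [this ▸ hdm]
      · have := (hs m).2; omega
    refine ⟨hJJ7mem m h7, ?_⟩
    rw [hXs m]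
    have h := hXm m; rw [h7] at h
    exact Fm7 h
  -- Stage 1: the uniformly expanding branches 2–5 stop occurring
  obtain ⟨K1, hK1⟩ := gains_stop hmono hd0 hbdd (fun k => 2 ≤ s k ∧ s k ≤ 5) (by
    rintro k ⟨ha, hb⟩
    refine ⟨k+1, Nat.lt_succ_self k, ?_⟩
    show 2 * |X k - Y k| ≤ |X (k+1) - Y (k+1)|
    rw [hXs, hYs]
    exact step_double ha hb (hXm k) (hYm k))
  -- Stage 2: branch 1 stops occurring
  obtain ⟨K2, hK2⟩ := gains_stop hmono hd0 hbdd (fun k => K1 ≤ k ∧ s k = 1) (by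
    rintro k ⟨hkK, hk1⟩
    have hr2 : (0:ℝ) < Rq := by linarith
    -- the branch-1 run must end
    have hend : ∃ n, s (k+n) ≠ 1 := by
      by_contra hall
      push_neg at hall
      have hw : ∀ n : ℕ, (X (k+n) - (1+Rq))⁻¹ = (X k - (1+Rq))⁻¹ - n * (Rq)⁻¹ := by
        intro n
        induction n with
        | zero => simp
        | succ n ih =>
          have hmem : X (k+n) ∈ JJ 1 := by
            have h := hXm (k+n); rw [hall n] at h; exact h
          rw [show k+(n+1) = (k+n)+1 from rfl, hXs, Fm1w hmem, ih]
          push_cast; ring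
      obtain ⟨n, hn⟩ := exists_nat_gt ((X k - (1+Rq))⁻¹ * Rq)
      have hmemn : X (k+n) ∈ JJ 1 := by
        have h := hXm (k+n); rw [hall n] at h; exact h
      have hpos : 0 < X (k+n) - (1+Rq) := by linarith [hmemn.1]
      have hlt : X (k+n) - (1+Rq) < Rq := by linarith [hmemn.2]
      have hinvlt : (Rq)⁻¹ < (X (k+n) - (1+Rq))⁻¹ := by
        apply inv_strictAnti₀ hpos hlt
      rw [hw n] at hinvlt
      have hinvR : 0 < (Rq)⁻¹ := inv_pos.mpr hr2
      have hstep : (X k - (1+Rq))⁻¹ < n * (Rq)⁻¹ := by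
        calc (X k - (1+Rq))⁻¹ = (X k - (1+Rq))⁻¹ * Rq * Rq⁻¹ :=
              (mul_inv_cancel_right₀ (ne_of_gt hr2) _).symm
          _ < n * Rq⁻¹ := mul_lt_mul_of_pos_right hn hinvR
      linarith
    classical
    set n := Nat.find hend with hndef
    have hnspec : s (k+n) ≠ 1 := Nat.find_spec hend
    have hnmin : ∀ i, i < n → s (k+i) = 1 := fun i hi => not_not.mp (Nat.find_min hend hi)
    have hn1 : 0 < n := by
      rcases Nat.eq_zero_or_pos n with h | h
      · exfalso; apply hnspec; rw [h, Nat.add_zero]; exact hk1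
      · exact h
    have hXmem1 : ∀ i, i < n → X (k+i) ∈ JJ 1 := fun i hi => by
      have h := hXm (k+i); rw [hnmin i hi] at h; exact h
    have hYmem1 : ∀ i, i < n → Y (k+i) ∈ JJ 1 := fun i hi => by
      have h := hYm (k+i); rw [hnmin i hi] at h; exact h
    have hinv : ∀ i, i ≤ n → d (k+i) * ((X k - (1+Rq))*(Y k - (1+Rq)))
        = d k * ((X (k+i) - (1+Rq))*(Y (k+i) - (1+Rq))) := by
      intro i
      induction i with
      | zero => intro _; rw [Nat.add_zero]
      | succ i ih =>
        intro hi
        have hii : i < n := by omega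
        have ihh := ih (by omega)
        have hx1 := hXmem1 i hii
        have hy1 := hYmem1 i hii
        have hW : 0 < (X (k+i) - (1+Rq))*(Y (k+i) - (1+Rq)) :=
          mul_pos (by linarith [hx1.1]) (by linarith [hy1.1])
        have hstep := run_step hx1 hy1
        have hd1 : d (k+(i+1)) = |Fm (X (k+i)) - Fm (Y (k+i))| := by
          show |X (k+(i+1)) - Y (k+(i+1))| = _
          rw [show k+(i+1) = (k+i)+1 from rfl, hXs, hYs]
        have hX1 : X (k+(i+1)) = Fm (X (k+i)) := by
          rw [show k+(i+1) = (k+i)+1 from rfl, hXs]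
        have hY1 : Y (k+(i+1)) = Fm (Y (k+i)) := by
          rw [show k+(i+1) = (k+i)+1 from rfl, hYs]
        apply mul_left_cancel₀ (ne_of_gt hW)
        have hdk : d (k+i) = |X (k+i) - Y (k+i)| := rfl
        calc (X (k+i) - (1+Rq))*(Y (k+i) - (1+Rq)) * (d (k+(i+1)) * ((X k - (1+Rq))*(Y k - (1+Rq))))
            = (d (k+(i+1)) * ((X (k+i) - (1+Rq))*(Y (k+i) - (1+Rq)))) * ((X k - (1+Rq))*(Y k - (1+Rq))) := by ring
          _ = (d (k+i) * ((X (k+(i+1)) - (1+Rq))*(Y (k+(i+1)) - (1+Rq)))) * ((X k - (1+Rq))*(Y k - (1+Rq))) := by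
              rw [hd1, hX1, hY1, hdk, hstep]
          _ = (d (k+i) * ((X k - (1+Rq))*(Y k - (1+Rq)))) * ((X (k+(i+1)) - (1+Rq))*(Y (k+(i+1)) - (1+Rq))) := by ring
          _ = (d k * ((X (k+i) - (1+Rq))*(Y (k+i) - (1+Rq)))) * ((X (k+(i+1)) - (1+Rq))*(Y (k+(i+1)) - (1+Rq))) := by rw [ihh]
          _ = (X (k+i) - (1+Rq))*(Y (k+i) - (1+Rq)) * (d k * ((X (k+(i+1)) - (1+Rq))*(Y (k+(i+1)) - (1+Rq)))) := by ring
    have hfin := hinv n le_rfl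
    have hx0 : X k ∈ JJ 1 := by
      have h := hXmem1 0 hn1; rw [Nat.add_zero] at h; exact h
    have hy0 : Y k ∈ JJ 1 := by
      have h := hYmem1 0 hn1; rw [Nat.add_zero] at h; exact h
    have hKn : K1 ≤ k + n := le_trans hkK (Nat.le_add_right _ _)
    have hs67 : s (k+n) = 6 ∨ s (k+n) = 7 := by
      have hno : ¬(2 ≤ s (k+n) ∧ s (k+n) ≤ 5) := hK1 (k+n) hKn
      have hb1 := (hs (k+n)).1
      have hb2 := (hs (k+n)).2
      omega
    have hXn : 3+2*Rq < X (k+n) := hmem67X (k+n) hs67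
    have hYn : 3+2*Rq < Y (k+n) := hmem67Y (k+n) hs67
    refine ⟨k+n, by omega, ?_⟩
    have ha1 : 0 < X k - (1+Rq) := by linarith [hx0.1]
    have ha2 : X k - (1+Rq) < Rq := by linarith [hx0.2]
    have hb1 : 0 < Y k - (1+Rq) := by linarith [hy0.1]
    have hb2 : Y k - (1+Rq) < Rq := by linarith [hy0.2]
    have hA1 : 2+Rq < X (k+n) - (1+Rq) := by linarith
    have hB1 : 2+Rq < Y (k+n) - (1+Rq) := by linarith
    nlinarith [hfin, hdpos k, hdpos (k+n), mul_pos ha1 hb1,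
      mul_lt_mul'' ha2 hb2 (le_of_lt ha1) (le_of_lt hb1),
      mul_lt_mul'' hA1 hB1 (by linarith) (by linarith),
      mul_pos (hdpos (k+n)) (mul_pos ha1 hb1)])
  -- Stage 3: branch 6 stops occurring
  obtain ⟨K3, hK3⟩ := gains_stop hmono hd0 hbdd (fun k => max K1 K2 ≤ k ∧ s k = 6) (by
    rintro k ⟨hk, hk6⟩
    have hK1k : K1 ≤ k := le_trans (le_max_left _ _) hk
    have hK2k : K2 ≤ k := le_trans (le_max_right _ _) hk
    have hno25 : ¬(2 ≤ s (k+1) ∧ s (k+1) ≤ 5) := hK1 (k+1) (by omega)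
    have hno1 : ¬(K1 ≤ k+1 ∧ s (k+1) = 1) := hK2 (k+1) (by omega)
    have hne1 : s (k+1) ≠ 1 := fun h => hno1 ⟨by omega, h⟩
    have hs67 : s (k+1) = 6 ∨ s (k+1) = 7 := by
      have hb1 := (hs (k+1)).1
      have hb2 := (hs (k+1)).2
      omega
    have hXn : 3+2*Rq < X (k+1) := hmem67X (k+1) hs67
    have hYn : 3+2*Rq < Y (k+1) := hmem67Y (k+1) hs67
    have hx6 : X k ∈ JJ 6 := by have h := hXm k; rw [hk6] at h; exact h
    have hy6 : Y k ∈ JJ 6 := by have h := hYm k; rw [hk6] at h; exact h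
    refine ⟨k+1, Nat.lt_succ_self k, ?_⟩
    show 2 * |X k - Y k| ≤ |X (k+1) - Y (k+1)|
    rw [hXs, hYs]
    refine step_double6 hx6 hy6 ?_ ?_
    · rw [← hXs]; exact hXn
    · rw [← hYs]; exact hYn)
  -- Final stage: only branch 7 remains, orbit escapes
  refine escape X (max (max K1 K2) K3) ?_
  intro m hm
  have hK1m : K1 ≤ m := le_trans (le_trans (le_max_left _ _) (le_max_left _ _)) hm
  have hK2m : K2 ≤ m := le_trans (le_trans (le_max_right _ _) (le_max_left _ _)) hm
  have hK3m : K3 ≤ m := le_trans (le_max_right _ _) hm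
  have hmaxm : max K1 K2 ≤ m := le_trans (le_max_left _ _) hm
  have h7 : s m = 7 := by
    have hno25 : ¬(2 ≤ s m ∧ s m ≤ 5) := hK1 m hK1m
    have hno1 : ¬(K1 ≤ m ∧ s m = 1) := hK2 m hK2m
    have hno6 : ¬(max K1 K2 ≤ m ∧ s m = 6) := hK3 m hK3m
    have hne1 : s m ≠ 1 := fun h => hno1 ⟨hK1m, h⟩
    have hne6 : s m ≠ 6 := fun h => hno6 ⟨hmaxm, h⟩
    have hb1 := (hs m).1
    have hb2 := (hs m).2
    omega
  refine ⟨hJJ7mem m h7, ?_⟩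
  rw [hXs m]
  have h := hXm m; rw [h7] at h
  exact Fm7 h
end
end
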